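/- arXiv:2211.13692 — 3 statements merged into one kernel-verified Lean document; each statement's English description precedes it below -/
import Mathlib

section
/- (Trade-off Theorem) Let Ψ : R^m → R^n be η-accurate over X, let x, x' ∈ X with x ≠ x', and set ẽ = A(x' − x), assumed nonzero with ‖ẽ‖ ≤ ε. Then the ε-stability constant C^ε_Ψ = sup over z ∈ X, 0 < ‖e‖ ≤ ε of (‖Ψ(Az + e) − z‖ − η)/‖e‖ satisfies C^ε_Ψ ≥ (‖x − x'‖ − 2η)/‖ẽ‖. -/
noncomputable def mulVecE {m n : ℕ} (A : Matrix (Fin m) (Fin n) ℝ)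
    (x : EuclideanSpace ℝ (Fin n)) : EuclideanSpace ℝ (Fin m) :=
  Matrix.toEuclideanLin A x

/-- Trade-off Theorem: the ε-stability constant is at least
(‖x − x'‖ − 2η)/‖ẽ‖ where ẽ = A(x' − x). -/
theorem stmt_4 {m n : ℕ} (A : Matrix (Fin m) (Fin n) ℝ)
    (X : Set (EuclideanSpace ℝ (Fin n))) (ε η : ℝ) (hε : 0 < ε) (hη : 0 ≤ η)
    (Ψ : EuclideanSpace ℝ (Fin m) → EuclideanSpace ℝ (Fin n))
    (hacc : ∀ z ∈ X, ‖Ψ (mulVecE A z) - z‖ ≤ η)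
    (x x' : EuclideanSpace ℝ (Fin n)) (hx : x ∈ X) (hx' : x' ∈ X)
    (hne : x ≠ x')
    (hte : mulVecE A (x' - x) ≠ 0) (hε' : ‖mulVecE A (x' - x)‖ ≤ ε)
    (hbdd : BddAbove {c : ℝ | ∃ z ∈ X, ∃ e : EuclideanSpace ℝ (Fin m),
        0 < ‖e‖ ∧ ‖e‖ ≤ ε ∧ c = (‖Ψ (mulVecE A z + e) - z‖ - η) / ‖e‖}) :
    sSup {c : ℝ | ∃ z ∈ X, ∃ e : EuclideanSpace ℝ (Fin m),
        0 < ‖e‖ ∧ ‖e‖ ≤ ε ∧ c = (‖Ψ (mulVecE A z + e) - z‖ - η) / ‖e‖} ≥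
      (‖x - x'‖ - 2 * η) / ‖mulVecE A (x' - x)‖ := by
  set e := mulVecE A (x' - x) with he
  have hmem : (‖Ψ (mulVecE A x + e) - x‖ - η) / ‖e‖ ∈
      {c : ℝ | ∃ z ∈ X, ∃ e : EuclideanSpace ℝ (Fin m),
        0 < ‖e‖ ∧ ‖e‖ ≤ ε ∧ c = (‖Ψ (mulVecE A z + e) - z‖ - η) / ‖e‖} :=
    ⟨x, hx, e, norm_pos_iff.mpr hte, hε', rfl⟩
  have hle := le_csSup hbdd hmem
  refine le_trans ?_ hle
  have hAdd : mulVecE A x + e = mulVecE A x' := by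
    simp [he, mulVecE, map_sub]
  rw [hAdd]
  apply div_le_div_of_nonneg_right ?_ (norm_nonneg e)
  have h1 : ‖x - x'‖ ≤ ‖Ψ (mulVecE A x') - x‖ + ‖Ψ (mulVecE A x') - x'‖ := by
    have := norm_sub_le (Ψ (mulVecE A x') - x) (Ψ (mulVecE A x') - x')
    simpa [sub_sub_sub_cancel_left, norm_sub_rev x' x] using this
  have h2 := hacc x' hx'
  linarith
end

section
/- Let Ψ : R^m → R^n be η-accurate over X and let x, x' ∈ X satisfy 0 < ‖A(x − x')‖ < η ≤ ε. Then the local ε-Lipschitz constant of Ψ at y = Ax, defined as sup over z with 0 < ‖z − y‖ ≤ ε of ‖Ψ(z) − Ψ(y)‖/‖z − y‖, is at least (‖x − x'‖ − 2η)/ε. -/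
/-- If 0 < ‖A(x − x')‖ < η ≤ ε, the local ε-Lipschitz constant of Ψ at y = Ax
is at least (‖x − x'‖ − 2η)/ε. -/
theorem stmt_5 {m n : ℕ} (A : Matrix (Fin m) (Fin n) ℝ)
    (X : Set (EuclideanSpace ℝ (Fin n))) (ε η : ℝ) (hη : 0 < η) (hηε : η ≤ ε)
    (Ψ : EuclideanSpace ℝ (Fin m) → EuclideanSpace ℝ (Fin n))
    (hacc : ∀ z ∈ X, ‖Ψ (mulVecE A z) - z‖ ≤ η)
    (x x' : EuclideanSpace ℝ (Fin n)) (hx : x ∈ X) (hx' : x' ∈ X)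
    (h0 : 0 < ‖mulVecE A (x - x')‖) (hlt : ‖mulVecE A (x - x')‖ < η)
    (hbdd : BddAbove {c : ℝ | ∃ z : EuclideanSpace ℝ (Fin m),
        0 < ‖z - mulVecE A x‖ ∧ ‖z - mulVecE A x‖ ≤ ε ∧
        c = ‖Ψ z - Ψ (mulVecE A x)‖ / ‖z - mulVecE A x‖}) :
    sSup {c : ℝ | ∃ z : EuclideanSpace ℝ (Fin m),
        0 < ‖z - mulVecE A x‖ ∧ ‖z - mulVecE A x‖ ≤ ε ∧
        c = ‖Ψ z - Ψ (mulVecE A x)‖ / ‖z - mulVecE A x‖} ≥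
      (‖x - x'‖ - 2 * η) / ε := by
  have hε : 0 < ε := lt_of_lt_of_le hη hηε
  have hsub : mulVecE A (x - x') = mulVecE A x - mulVecE A x' := by
    simp [mulVecE, map_sub]
  set y := mulVecE A x with hy
  set z := mulVecE A x' with hz
  have hd : ‖z - y‖ = ‖mulVecE A (x - x')‖ := by
    rw [hsub, norm_sub_rev]
  have hd0 : 0 < ‖z - y‖ := by rw [hd]; exact h0
  have hdε : ‖z - y‖ ≤ ε := by rw [hd]; exact le_trans hlt.le hηε
  have hmem : ‖Ψ z - Ψ y‖ / ‖z - y‖ ∈ {c : ℝ | ∃ w : EuclideanSpace ℝ (Fin m),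
      0 < ‖w - mulVecE A x‖ ∧ ‖w - mulVecE A x‖ ≤ ε ∧
      c = ‖Ψ w - Ψ (mulVecE A x)‖ / ‖w - mulVecE A x‖} := ⟨z, hd0, hdε, rfl⟩
  have hle := le_csSup hbdd hmem
  refine le_trans ?_ hle
  -- lower bound for the numerator
  have h1 : ‖Ψ z - x'‖ ≤ η := hacc x' hx'
  have h2 : ‖Ψ y - x‖ ≤ η := hacc x hx
  have hnum : ‖x - x'‖ - 2 * η ≤ ‖Ψ z - Ψ y‖ := by
    have key : ‖x - x'‖ ≤ ‖Ψ z - Ψ y‖ + ‖Ψ z - x'‖ + ‖Ψ y - x‖ := by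
      have : x - x' = (Ψ y - x') - (Ψ y - x) := by abel
      calc ‖x - x'‖ = ‖(Ψ y - x') - (Ψ y - x)‖ := by rw [← this]
        _ ≤ ‖Ψ y - x'‖ + ‖Ψ y - x‖ := norm_sub_le _ _
        _ = ‖(Ψ z - x') - (Ψ z - Ψ y)‖ + ‖Ψ y - x‖ := by rw [show
              Ψ y - x' = (Ψ z - x') - (Ψ z - Ψ y) by abel]
        _ ≤ (‖Ψ z - x'‖ + ‖Ψ z - Ψ y‖) + ‖Ψ y - x‖ :=
              add_le_add_left (norm_sub_le _ _) _
        _ = ‖Ψ z - Ψ y‖ + ‖Ψ z - x'‖ + ‖Ψ y - x‖ := by ring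
    linarith
  rcases le_or_gt (‖x - x'‖ - 2 * η) 0 with h | h
  · exact le_trans (div_nonpos_of_nonpos_of_nonneg h hε.le)
      (div_nonneg (norm_nonneg _) hd0.le)
  · exact div_le_div₀ (norm_nonneg _) hnum hd0 hdε
end

section
/- Let Ψ be an η-accurate reconstructor over X for the problem with matrix A, and suppose there exist x, x' ∈ X with 0 < ‖A(x−x')‖ < η ≤ ε and ‖x − x'‖ = η/σ_t (σ_t > 0 a singular value of A). Then the local ε-Lipschitz constant of Ψ over Y = A(X) is at least (η − 2σ_t η)/(ε σ_t). Consequently, if σ_t ≤ η/(ε + 2η), this lower bound is ≥ 1, so Ψ cannot have ε-Lipschitz constant less than 1 over Y. -/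
/-- If there are x, x' ∈ X with 0 < ‖A(x−x')‖ < η ≤ ε and ‖x − x'‖ = η/σ_t, the
ε-local Lipschitz constant of Ψ over Y = A(X) is at least (η − 2σ_t η)/(ε σ_t);
hence if σ_t ≤ η/(ε + 2η) it is at least 1. -/
theorem stmt_7 {m n : ℕ} (A : Matrix (Fin m) (Fin n) ℝ)
    (X : Set (EuclideanSpace ℝ (Fin n))) (ε η σt : ℝ)
    (hη : 0 < η) (hηε : η ≤ ε) (hσt : 0 < σt)
    (Ψ : EuclideanSpace ℝ (Fin m) → EuclideanSpace ℝ (Fin n))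
    (hacc : ∀ z ∈ X, ‖Ψ (mulVecE A z) - z‖ ≤ η)
    (x x' : EuclideanSpace ℝ (Fin n)) (hx : x ∈ X) (hx' : x' ∈ X)
    (h0 : 0 < ‖mulVecE A (x - x')‖) (hlt : ‖mulVecE A (x - x')‖ < η)
    (hdist : ‖x - x'‖ = η / σt)
    (hbdd : BddAbove {c : ℝ | ∃ z ∈ X, ∃ w : EuclideanSpace ℝ (Fin m),
        0 < ‖w - mulVecE A z‖ ∧ ‖w - mulVecE A z‖ ≤ ε ∧
        c = ‖Ψ w - Ψ (mulVecE A z)‖ / ‖w - mulVecE A z‖}) :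
    sSup {c : ℝ | ∃ z ∈ X, ∃ w : EuclideanSpace ℝ (Fin m),
        0 < ‖w - mulVecE A z‖ ∧ ‖w - mulVecE A z‖ ≤ ε ∧
        c = ‖Ψ w - Ψ (mulVecE A z)‖ / ‖w - mulVecE A z‖} ≥
      (η - 2 * σt * η) / (ε * σt) ∧
    (σt ≤ η / (ε + 2 * η) →
      1 ≤ sSup {c : ℝ | ∃ z ∈ X, ∃ w : EuclideanSpace ℝ (Fin m),
        0 < ‖w - mulVecE A z‖ ∧ ‖w - mulVecE A z‖ ≤ ε ∧
        c = ‖Ψ w - Ψ (mulVecE A z)‖ / ‖w - mulVecE A z‖}) := by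
  have hε : 0 < ε := lt_of_lt_of_le hη hηε
  have hsub : mulVecE A (x - x') = mulVecE A x - mulVecE A x' := by
    simp [mulVecE, map_sub]
  set S := {c : ℝ | ∃ z ∈ X, ∃ w : EuclideanSpace ℝ (Fin m),
      0 < ‖w - mulVecE A z‖ ∧ ‖w - mulVecE A z‖ ≤ ε ∧
      c = ‖Ψ w - Ψ (mulVecE A z)‖ / ‖w - mulVecE A z‖} with hS
  set c := ‖Ψ (mulVecE A x) - Ψ (mulVecE A x')‖ / ‖mulVecE A x - mulVecE A x'‖ with hc
  have hmem : c ∈ S := by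
    refine ⟨x', hx', mulVecE A x, ?_, ?_, ?_⟩
    · rw [← hsub]; exact h0
    · rw [← hsub]; exact le_trans hlt.le hηε
    · rfl
  have hN : (η - 2 * σt * η) / σt ≤ ‖Ψ (mulVecE A x) - Ψ (mulVecE A x')‖ := by
    have h1 := hacc x hx
    have h2 := hacc x' hx'
    have htri : ‖x - x'‖ ≤ ‖Ψ (mulVecE A x) - x‖ + ‖Ψ (mulVecE A x) - Ψ (mulVecE A x')‖ + ‖Ψ (mulVecE A x') - x'‖ := by
      have := norm_sub_le_norm_sub_add_norm_sub (x) (Ψ (mulVecE A x)) x'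
      have := norm_sub_le_norm_sub_add_norm_sub x (Ψ (mulVecE A x')) x'
      calc ‖x - x'‖ ≤ ‖x - Ψ (mulVecE A x)‖ + ‖Ψ (mulVecE A x) - x'‖ :=
            norm_sub_le_norm_sub_add_norm_sub _ _ _
        _ ≤ ‖x - Ψ (mulVecE A x)‖ + (‖Ψ (mulVecE A x) - Ψ (mulVecE A x')‖ + ‖Ψ (mulVecE A x') - x'‖) := by
            gcongr; exact norm_sub_le_norm_sub_add_norm_sub _ _ _
        _ = ‖Ψ (mulVecE A x) - x‖ + ‖Ψ (mulVecE A x) - Ψ (mulVecE A x')‖ + ‖Ψ (mulVecE A x') - x'‖ := by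
            rw [norm_sub_rev x]; ring
    have : η / σt - 2 * η ≤ ‖Ψ (mulVecE A x) - Ψ (mulVecE A x')‖ := by
      rw [hdist] at htri; linarith
    have heq : (η - 2 * σt * η) / σt = η / σt - 2 * η := by
      field_simp
    linarith [heq ▸ this]
  have hclb : (η - 2 * σt * η) / (ε * σt) ≤ c := by
    rcases le_or_gt (η - 2 * σt * η) 0 with h | h
    · have : (η - 2 * σt * η) / (ε * σt) ≤ 0 :=
        div_nonpos_of_nonpos_of_nonneg h (mul_pos hε hσt).le
      exact le_trans this (div_nonneg (norm_nonneg _) (norm_nonneg _))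
    · have hd0 : 0 < ‖mulVecE A x - mulVecE A x'‖ := hsub ▸ h0
      have hdε : ‖mulVecE A x - mulVecE A x'‖ ≤ ε := by
        rw [← hsub]; exact le_trans hlt.le hηε
      have : (η - 2 * σt * η) / σt / ε ≤ ‖Ψ (mulVecE A x) - Ψ (mulVecE A x')‖ / ‖mulVecE A x - mulVecE A x'‖ :=
        div_le_div₀ (norm_nonneg _) hN hd0 hdε
      calc (η - 2 * σt * η) / (ε * σt) = (η - 2 * σt * η) / σt / ε := by
            rw [div_div]; ring_nf
        _ ≤ c := this
  have hmain : (η - 2 * σt * η) / (ε * σt) ≤ sSup S :=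
    le_trans hclb (le_csSup hbdd hmem)
  refine ⟨hmain, fun hσ => ?_⟩
  have hεη : 0 < ε + 2 * η := by linarith
  have : σt * (ε + 2 * η) ≤ η := by
    rw [div_eq_mul_inv] at hσ
    calc σt * (ε + 2 * η) ≤ η * (ε + 2 * η)⁻¹ * (ε + 2 * η) := by gcongr
      _ = η := by field_simp
  have h1 : 1 ≤ (η - 2 * σt * η) / (ε * σt) := by
    rw [le_div_iff₀ (mul_pos hε hσt)]; nlinarith
  linarith
end
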